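/- Let y(ρ) be a continuously differentiable real function on [0,1) with y(ρ) = O(ρ) as ρ → 0. Then for 0 < r < 1 and c > 0 with √c · r < π/2: r ∫₀ʳ y'(ρ)² dρ - c r ∫₀ʳ y(ρ)² dρ - √c · r · cot(√c r) · y(r)² ≥ 0, and equality holds for y(ρ) = c^{-1/2} sin(√c ρ). -/

import Mathlib

open Real Set intervalIntegral Filter

lemma gv_hw (s : ℝ) {x : ℝ} (hx : Real.sin (s*x) ≠ 0) :
    HasDerivAt (fun x => s * (Real.cos (s*x) / Real.sin (s*x)))
      (-(s^2) - (s * (Real.cos (s*x) / Real.sin (s*x)))^2) x := by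
  have hlin : HasDerivAt (fun x : ℝ => s * x) s x := by
    simpa using (hasDerivAt_id x).const_mul s
  have hcos : HasDerivAt (fun x => Real.cos (s*x)) (-Real.sin (s*x) * s) x :=
    (Real.hasDerivAt_cos (s*x)).comp x hlin
  have hsin : HasDerivAt (fun x => Real.sin (s*x)) (Real.cos (s*x) * s) x :=
    (Real.hasDerivAt_sin (s*x)).comp x hlin
  have h := (hcos.div hsin hx).const_mul s
  refine h.congr_deriv (Eq.symm ?_)
  have h1 := Real.sin_sq_add_cos_sq (s*x)
  field_simp

lemma gv_cos_sq (s : ℝ) (hs : s ≠ 0) (r : ℝ) :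
    ∫ ρ in (0:ℝ)..r, (Real.cos (s*ρ))^2
      = r/2 + Real.sin (s*r) * Real.cos (s*r) / (2*s) := by
  have key : ∀ x ∈ uIcc (0:ℝ) r,
      HasDerivAt (fun ρ => ρ/2 + Real.sin (s*ρ) * Real.cos (s*ρ) / (2*s))
        ((Real.cos (s*x))^2) x := by
    intro x _
    have hlin : HasDerivAt (fun x : ℝ => s * x) s x := by
      simpa using (hasDerivAt_id x).const_mul s
    have hcos : HasDerivAt (fun x => Real.cos (s*x)) (-Real.sin (s*x) * s) x :=
      (Real.hasDerivAt_cos (s*x)).comp x hlin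
    have hsin : HasDerivAt (fun x => Real.sin (s*x)) (Real.cos (s*x) * s) x :=
      (Real.hasDerivAt_sin (s*x)).comp x hlin
    have h := ((hasDerivAt_id x).div_const 2).add
      (((hsin.mul hcos)).div_const (2*s))
    refine h.congr_deriv (Eq.symm ?_)
    have h1 := Real.sin_sq_add_cos_sq (s*x)
    field_simp
    linear_combination h1
  have hint : IntervalIntegrable (fun ρ => (Real.cos (s*ρ))^2) MeasureTheory.volume 0 r :=
    (Continuous.continuousOn (by continuity)).intervalIntegrable
  have := intervalIntegral.integral_eq_sub_of_hasDerivAt key hint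
  simp at this
  rw [this]

lemma gv_sin_sq (s : ℝ) (hs : s ≠ 0) (r : ℝ) :
    ∫ ρ in (0:ℝ)..r, (Real.sin (s*ρ))^2
      = r/2 - Real.sin (s*r) * Real.cos (s*r) / (2*s) := by
  have key : ∀ x ∈ uIcc (0:ℝ) r,
      HasDerivAt (fun ρ => ρ/2 - Real.sin (s*ρ) * Real.cos (s*ρ) / (2*s))
        ((Real.sin (s*x))^2) x := by
    intro x _
    have hlin : HasDerivAt (fun x : ℝ => s * x) s x := by
      simpa using (hasDerivAt_id x).const_mul s
    have hcos : HasDerivAt (fun x => Real.cos (s*x)) (-Real.sin (s*x) * s) x :=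
      (Real.hasDerivAt_cos (s*x)).comp x hlin
    have hsin : HasDerivAt (fun x => Real.sin (s*x)) (Real.cos (s*x) * s) x :=
      (Real.hasDerivAt_sin (s*x)).comp x hlin
    have h := ((hasDerivAt_id x).div_const 2).sub
      (((hsin.mul hcos)).div_const (2*s))
    refine h.congr_deriv (Eq.symm ?_)
    have h1 := Real.sin_sq_add_cos_sq (s*x)
    field_simp
    linear_combination h1
  have hint : IntervalIntegrable (fun ρ => (Real.sin (s*ρ))^2) MeasureTheory.volume 0 r :=
    (Continuous.continuousOn (by continuity)).intervalIntegrable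
  have := intervalIntegral.integral_eq_sub_of_hasDerivAt key hint
  simp at this
  rw [this]

/-- Gabriel's variational lemma: if `y` is `C¹` on `[0,1)` with `y(ρ) = O(ρ)` near `0`,
then for `0 < r < 1`, `c > 0` with `√c r < π/2`,
`r∫₀ʳ y'² - c r∫₀ʳ y² - √c r cot(√c r) y(r)² ≥ 0`,
with equality for `y(ρ) = c^{-1/2} sin(√c ρ)`. -/
theorem gabriel_variational (y : ℝ → ℝ)
    (hy : ContinuousOn y (Ico (0 : ℝ) 1))
    (hy' : ContinuousOn (deriv y) (Ico (0 : ℝ) 1))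
    (hdiff : ∀ ρ ∈ Ico (0 : ℝ) 1, DifferentiableAt ℝ y ρ)
    (hO : ∃ C : ℝ, 0 < C ∧ ∀ ρ ∈ Ico (0 : ℝ) 1, |y ρ| ≤ C * ρ)
    (r c : ℝ) (hr0 : 0 < r) (hr1 : r < 1) (hc : 0 < c)
    (hcr : Real.sqrt c * r < π / 2) :
    0 ≤ (r * ∫ ρ in (0 : ℝ)..r, (deriv y ρ) ^ 2) -
        (c * r * ∫ ρ in (0 : ℝ)..r, (y ρ) ^ 2) -
        Real.sqrt c * r * (Real.cos (Real.sqrt c * r) / Real.sin (Real.sqrt c * r)) *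
          (y r) ^ 2 ∧
      (r * ∫ ρ in (0 : ℝ)..r,
            (deriv (fun t => (Real.sqrt c)⁻¹ * Real.sin (Real.sqrt c * t)) ρ) ^ 2) -
          (c * r * ∫ ρ in (0 : ℝ)..r,
            ((Real.sqrt c)⁻¹ * Real.sin (Real.sqrt c * ρ)) ^ 2) -
          Real.sqrt c * r * (Real.cos (Real.sqrt c * r) / Real.sin (Real.sqrt c * r)) *
            ((Real.sqrt c)⁻¹ * Real.sin (Real.sqrt c * r)) ^ 2 = 0 := by
  constructor
  · -- part 1
    obtain ⟨C, hC, hCy⟩ := hO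
    set s := Real.sqrt c with hsdef
    have hs : 0 < s := Real.sqrt_pos.2 hc
    have hs2 : s^2 = c := Real.sq_sqrt hc.le
    have hsr : 0 < s * r := mul_pos hs hr0
    set w : ℝ → ℝ := fun x => s * (Real.cos (s*x) / Real.sin (s*x)) with hwdef
    set F : ℝ → ℝ := fun x => w x * (y x)^2 with hFdef
    set h : ℝ → ℝ := fun x => (deriv y x)^2 - c * (y x)^2 with hhdef
    have hsinpos : ∀ x, 0 < x → x ≤ r → 0 < Real.sin (s*x) := by
      intro x hx0 hxr
      apply Real.sin_pos_of_pos_of_lt_pi (mul_pos hs hx0)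
      have : s * x ≤ s * r := mul_le_mul_of_nonneg_left hxr hs.le
      linarith [Real.pi_pos]
    have hsinr : 0 < Real.sin (s*r) := hsinpos r hr0 le_rfl
    have hsub0 : Icc (0:ℝ) r ⊆ Ico 0 1 := fun x hx => ⟨hx.1, lt_of_le_of_lt hx.2 hr1⟩
    have hconth : ContinuousOn h (Icc (0:ℝ) r) :=
      ((hy'.mono hsub0).pow 2).sub (continuousOn_const.mul ((hy.mono hsub0).pow 2))
    have hint_h : ∀ a b : ℝ, a ∈ Icc (0:ℝ) r → b ∈ Icc (0:ℝ) r →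
        IntervalIntegrable h MeasureTheory.volume a b := by
      intro a b ha hb
      exact ((hconth.mono (uIcc_subset_Icc ha hb))).intervalIntegrable
    have key : ∀ ε ∈ Ioo (0:ℝ) r,
        F r - F ε ≤ (∫ x in (0:ℝ)..r, h x) - ∫ x in (0:ℝ)..ε, h x := by
      intro ε hε
      have hεr : ε ≤ r := hε.2.le
      have huIcc : uIcc ε r = Icc ε r := uIcc_of_le hεr
      have hsubε : Icc ε r ⊆ Ico (0:ℝ) 1 :=
        fun x hx => ⟨le_trans hε.1.le hx.1, lt_of_le_of_lt hx.2 hr1⟩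
      have hFderiv : ∀ x ∈ uIcc ε r,
          HasDerivAt F (h x - (deriv y x - w x * y x)^2) x := by
        intro x hx
        rw [huIcc] at hx
        have hx0 : 0 < x := lt_of_lt_of_le hε.1 hx.1
        have hsinx : Real.sin (s*x) ≠ 0 := (hsinpos x hx0 hx.2).ne'
        have hwx := gv_hw s hsinx
        have hyx : HasDerivAt y (deriv y x) x :=
          (hdiff x (hsubε hx)).hasDerivAt
        have hmul := hwx.mul (hyx.pow 2)
        refine hmul.congr_deriv (Eq.symm ?_)
        simp only [hhdef, hwdef, ← hs2, Pi.pow_apply]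
        ring
      have hwcont : ContinuousOn w (Icc ε r) := by
        apply continuousOn_const.mul
        apply ContinuousOn.div
        · exact (Real.continuous_cos.comp (continuous_const.mul continuous_id)).continuousOn
        · exact (Real.continuous_sin.comp (continuous_const.mul continuous_id)).continuousOn
        · intro x hx
          exact (hsinpos x (lt_of_lt_of_le hε.1 hx.1) hx.2).ne'
      have hGcont : ContinuousOn (fun x => h x - (deriv y x - w x * y x)^2) (Icc ε r) :=
        (hconth.mono (Icc_subset_Icc hε.1.le le_rfl)).sub
          (((hy'.mono hsubε).sub (hwcont.mul (hy.mono hsubε))).pow 2)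
      have hGint : IntervalIntegrable (fun x => h x - (deriv y x - w x * y x)^2)
          MeasureTheory.volume ε r := by
        apply ContinuousOn.intervalIntegrable
        rwa [huIcc]
      have hFTC := intervalIntegral.integral_eq_sub_of_hasDerivAt hFderiv hGint
      have hintε : IntervalIntegrable h MeasureTheory.volume ε r :=
        hint_h ε r ⟨hε.1.le, hεr⟩ ⟨hr0.le, le_rfl⟩
      have hmono : (∫ x in ε..r, (h x - (deriv y x - w x * y x)^2)) ≤ ∫ x in ε..r, h x :=
        intervalIntegral.integral_mono_on hεr hGint hintε
          (fun x _ => by nlinarith [sq_nonneg (deriv y x - w x * y x)])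
      have hadd : (∫ x in (0:ℝ)..ε, h x) + ∫ x in ε..r, h x = ∫ x in (0:ℝ)..r, h x :=
        intervalIntegral.integral_add_adjacent_intervals
          (hint_h 0 ε ⟨le_rfl, hr0.le⟩ ⟨hε.1.le, hεr⟩) hintε
      rw [hFTC] at hmono
      linarith
    obtain ⟨M, hM⟩ := (isCompact_Icc : IsCompact (Icc (0:ℝ) r)).exists_bound_of_continuousOn hconth
    have t1 : Tendsto (fun ε => ∫ x in (0:ℝ)..ε, h x) (nhdsWithin 0 (Ioi 0)) (nhds 0) := by
      refine squeeze_zero_norm' (a := fun ε => M * ε) ?_ ?_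
      · filter_upwards [Ioo_mem_nhdsGT_of_mem (⟨le_rfl, hr0⟩ : (0:ℝ) ∈ Ico 0 r)] with ε hε
        have hb : ∀ x ∈ Set.uIoc (0:ℝ) ε, ‖h x‖ ≤ M := by
          intro x hx
          rw [uIoc_of_le hε.1.le] at hx
          exact hM x ⟨hx.1.le, le_trans hx.2 hε.2.le⟩
        calc ‖∫ x in (0:ℝ)..ε, h x‖ ≤ M * |ε - 0| :=
              intervalIntegral.norm_integral_le_of_norm_le_const hb
          _ = M * ε := by rw [sub_zero, abs_of_pos hε.1]
      · have hM0 : Tendsto (fun ε : ℝ => M * ε) (nhds 0) (nhds (M * 0)) :=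
          (continuous_const.mul continuous_id).tendsto 0
        simpa using hM0.mono_left nhdsWithin_le_nhds
    have hslope : Tendsto (fun ε => Real.sin (s*ε) / ε) (nhdsWithin 0 ({0}ᶜ)) (nhds s) := by
      have hlin : HasDerivAt (fun x : ℝ => s * x) s 0 := by
        simpa using (hasDerivAt_id (0:ℝ)).const_mul s
      have hsin0 : HasDerivAt (fun x => Real.sin (s*x)) (Real.cos (s*0) * s) 0 :=
        (Real.hasDerivAt_sin (s*0)).comp 0 hlin
      have hts := hasDerivAt_iff_tendsto_slope.1 hsin0
      simp only [mul_zero, Real.cos_zero, one_mul] at hts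
      refine hts.congr fun ε => ?_
      simp [slope_def_field]
    have hinv : Tendsto (fun ε => ε / Real.sin (s*ε)) (nhdsWithin 0 (Ioi 0)) (nhds s⁻¹) := by
      have hmono2 : nhdsWithin (0:ℝ) (Ioi 0) ≤ nhdsWithin 0 ({0}ᶜ) :=
        nhdsWithin_mono 0 (fun x hx => (Set.mem_Ioi.1 hx).ne')
      have := (hslope.mono_left hmono2).inv₀ hs.ne'
      refine this.congr fun ε => ?_
      rw [inv_div]
    have t2 : Tendsto F (nhdsWithin 0 (Ioi 0)) (nhds 0) := by
      refine squeeze_zero_norm' (a := fun ε => s * C^2 * ε * (ε / Real.sin (s*ε))) ?_ ?_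
      · filter_upwards [Ioo_mem_nhdsGT_of_mem (⟨le_rfl, hr0⟩ : (0:ℝ) ∈ Ico 0 r)] with ε hε
        have hε0 : 0 < ε := hε.1
        have hsinε : 0 < Real.sin (s*ε) := hsinpos ε hε0 hε.2.le
        have hsε : s * ε ≤ s * r := mul_le_mul_of_nonneg_left hε.2.le hs.le
        have hcosε : 0 ≤ Real.cos (s*ε) := by
          apply Real.cos_nonneg_of_mem_Icc
          constructor
          · nlinarith [Real.pi_pos, mul_pos hs hε0]
          · linarith
        have hyb : |y ε| ≤ C * ε := hCy ε ⟨hε0.le, lt_trans hε.2 hr1⟩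
        have hy2 : (y ε)^2 ≤ (C*ε)^2 := by
          calc (y ε)^2 = |y ε|^2 := (sq_abs _).symm
            _ ≤ (C*ε)^2 := pow_le_pow_left₀ (abs_nonneg _) hyb 2
        have hFnn : 0 ≤ F ε :=
          mul_nonneg (mul_nonneg hs.le (div_nonneg hcosε hsinε.le)) (sq_nonneg _)
        rw [Real.norm_eq_abs, abs_of_nonneg hFnn]
        have hnum : s * Real.cos (s*ε) * (y ε)^2 ≤ s * C^2 * ε^2 := by
          nlinarith [mul_nonneg (mul_nonneg hs.le (sub_nonneg.2 (Real.cos_le_one (s*ε)))) (sq_nonneg (y ε)),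
            mul_nonneg hs.le (sub_nonneg.2 hy2)]
        have e1 : F ε = (s * Real.cos (s*ε) * (y ε)^2) / Real.sin (s*ε) := by
          simp only [hFdef, hwdef]; ring
        have e2 : s * C^2 * ε * (ε / Real.sin (s*ε)) = (s * C^2 * ε^2) / Real.sin (s*ε) := by
          ring
        rw [e1, e2]
        exact div_le_div_of_nonneg_right hnum hsinε.le
      · have tA : Tendsto (fun ε : ℝ => s * C^2 * ε) (nhdsWithin 0 (Ioi 0)) (nhds 0) := by
          have hA : Tendsto (fun ε : ℝ => s * C^2 * ε) (nhds 0) (nhds (s * C^2 * 0)) :=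
            (continuous_const.mul continuous_id).tendsto 0
          simpa using hA.mono_left nhdsWithin_le_nhds
        simpa using tA.mul hinv
    have hfinal : F r ≤ ∫ x in (0:ℝ)..r, h x := by
      have hL : Tendsto (fun ε => F r - F ε) (nhdsWithin 0 (Ioi 0)) (nhds (F r)) := by
        simpa using tendsto_const_nhds.sub t2
      have hR : Tendsto (fun ε => (∫ x in (0:ℝ)..r, h x) - ∫ x in (0:ℝ)..ε, h x)
          (nhdsWithin 0 (Ioi 0)) (nhds (∫ x in (0:ℝ)..r, h x)) := by
        simpa using tendsto_const_nhds.sub t1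
      refine le_of_tendsto_of_tendsto hL hR ?_
      filter_upwards [Ioo_mem_nhdsGT_of_mem (⟨le_rfl, hr0⟩ : (0:ℝ) ∈ Ico 0 r)] with ε hε
      exact key ε hε
    have h1 : IntervalIntegrable (fun x => (deriv y x)^2) MeasureTheory.volume 0 r := by
      apply ContinuousOn.intervalIntegrable
      rw [uIcc_of_le hr0.le]
      exact (hy'.mono hsub0).pow 2
    have h2 : IntervalIntegrable (fun x => c * (y x)^2) MeasureTheory.volume 0 r := by
      apply ContinuousOn.intervalIntegrable
      rw [uIcc_of_le hr0.le]
      exact continuousOn_const.mul ((hy.mono hsub0).pow 2)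
    have hsplit : (∫ x in (0:ℝ)..r, h x)
        = (∫ ρ in (0:ℝ)..r, (deriv y ρ)^2) - c * ∫ ρ in (0:ℝ)..r, (y ρ)^2 := by
      simp only [hhdef]
      rw [intervalIntegral.integral_sub h1 h2, intervalIntegral.integral_const_mul]
    have hkey2 : 0 ≤ r * ((∫ x in (0:ℝ)..r, h x) - F r) :=
      mul_nonneg hr0.le (sub_nonneg.2 hfinal)
    rw [hsplit] at hkey2
    simp only [hFdef, hwdef] at hkey2
    have hring : r * (((∫ ρ in (0:ℝ)..r, (deriv y ρ)^2) - c * ∫ ρ in (0:ℝ)..r, (y ρ)^2)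
          - s * (Real.cos (s*r) / Real.sin (s*r)) * (y r)^2)
        = (r * ∫ ρ in (0:ℝ)..r, (deriv y ρ)^2) - (c * r * ∫ ρ in (0:ℝ)..r, (y ρ)^2)
          - s * r * (Real.cos (s*r) / Real.sin (s*r)) * (y r)^2 := by ring
    linarith [hkey2, hring]
  · -- part 2
    set s := Real.sqrt c with hsdef
    have hs : 0 < s := Real.sqrt_pos.2 hc
    have hs2 : s^2 = c := Real.sq_sqrt hc.le
    have hsr : 0 < s * r := mul_pos hs hr0
    have hsinr : 0 < Real.sin (s*r) :=
      Real.sin_pos_of_pos_of_lt_pi hsr (lt_trans hcr (by linarith [Real.pi_pos]))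
    have hderiv : deriv (fun t => s⁻¹ * Real.sin (s * t)) = fun ρ => Real.cos (s*ρ) := by
      funext ρ
      have hlin : HasDerivAt (fun x : ℝ => s * x) s ρ := by
        simpa using (hasDerivAt_id ρ).const_mul s
      have hsin : HasDerivAt (fun x => Real.sin (s*x)) (Real.cos (s*ρ) * s) ρ :=
        (Real.hasDerivAt_sin (s*ρ)).comp ρ hlin
      have h := (hsin.const_mul s⁻¹).deriv
      rw [h]
      field_simp
    rw [hderiv, gv_cos_sq s hs.ne' r]
    have h2 : ∀ ρ : ℝ, (s⁻¹ * Real.sin (s*ρ))^2 = s⁻¹^2 * (Real.sin (s*ρ))^2 := fun ρ => by ring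
    simp only [h2]
    rw [intervalIntegral.integral_const_mul, gv_sin_sq s hs.ne' r]
    have hsn : s ≠ 0 := hs.ne'
    have hsinn : Real.sin (s*r) ≠ 0 := hsinr.ne'
    field_simp
    linear_combination r * (r * s - Real.sin (r*s) * Real.cos (r*s)) * hs2
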